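/- Let α be irrational with convergents p_n/q_n and z_n = q_nα − p_n, and fix n ≥ 0. Consider the set 𝒳_n = {qα − p : 0 ≤ q < q_{n+1}, p ∈ ℤ} ⊂ ℝ, and let x = qα − p ∈ 𝒳_n (with 0 ≤ q < q_{n+1}). If n is even, then the smallest element of 𝒳_n strictly greater than x is x + |z_n| when q < q_{n+1} − q_n, and x + |z_n| + |z_{n+1}| when q ≥ q_{n+1} − q_n. If n is odd, then the largest element of 𝒳_n strictly less than x is x − |z_n| when q < q_{n+1} − q_n, and x − |z_n| − |z_{n+1}| when q ≥ q_{n+1} − q_n. -/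

import Mathlib

/-- Gauss map iterates of `α`: `x₀ = {α}`, `x_{n+1} = {1/x_n}`. -/
noncomputable def gaussIter (α : ℝ) : ℕ → ℝ
  | 0 => Int.fract α
  | n + 1 => Int.fract (gaussIter α n)⁻¹

/-- `cfa α n` is the partial quotient `a_{n+1} = ⌊1/x_n⌋` of the continued fraction of `α`. -/
noncomputable def cfa (α : ℝ) (n : ℕ) : ℕ := ⌊(gaussIter α n)⁻¹⌋₊

/-- Denominators `q_n` of the continued fraction convergents of `α`:
`q₀ = 1`, `q₁ = a₁`, `q_{n+2} = a_{n+2} q_{n+1} + q_n`. -/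
noncomputable def cfq (α : ℝ) : ℕ → ℕ
  | 0 => 1
  | 1 => cfa α 0
  | n + 2 => cfa α (n + 1) * cfq α (n + 1) + cfq α n

/-- Numerators `p_n` of the continued fraction convergents of `α`:
`p₀ = ⌊α⌋`, `p₁ = a₁⌊α⌋ + 1`, `p_{n+2} = a_{n+2} p_{n+1} + p_n`. -/
noncomputable def cfp (α : ℝ) : ℕ → ℤ
  | 0 => ⌊α⌋
  | 1 => cfa α 0 * ⌊α⌋ + 1
  | n + 2 => cfa α (n + 1) * cfp α (n + 1) + cfp α n

/-- `z_n = q_n α - p_n`. -/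
noncomputable def cfz (α : ℝ) (n : ℕ) : ℝ := (cfq α n : ℝ) * α - (cfp α n : ℝ)

/-- The set `𝒳_n = {qα - p : 0 ≤ q < q_{n+1}, p ∈ ℤ}`. -/
noncomputable def Xset (α : ℝ) (n : ℕ) : Set ℝ :=
  {y | ∃ q' : ℕ, q' < cfq α (n + 1) ∧ ∃ p' : ℤ, y = (q' : ℝ) * α - (p' : ℝ)}

lemma gauss_irr {α : ℝ} (hα : Irrational α) : ∀ n, Irrational (gaussIter α n) := by
  intro n
  induction n with
  | zero =>
    show Irrational (Int.fract α)
    rw [← Int.self_sub_floor]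
    exact hα.sub_intCast _
  | succ k ih =>
    show Irrational (Int.fract (gaussIter α k)⁻¹)
    rw [← Int.self_sub_floor]
    exact (ih.inv).sub_intCast _

lemma gauss_mem {α : ℝ} (hα : Irrational α) (n : ℕ) :
    0 < gaussIter α n ∧ gaussIter α n < 1 := by
  have h := gauss_irr hα n
  cases n with
  | zero =>
    refine ⟨lt_of_le_of_ne (Int.fract_nonneg α) ?_, Int.fract_lt_one α⟩
    intro he; exact (gauss_irr hα 0).ne_int 0 (by simpa using he.symm)
  | succ k =>
    refine ⟨lt_of_le_of_ne (Int.fract_nonneg _) ?_, Int.fract_lt_one _⟩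
    intro he; exact (gauss_irr hα (k+1)).ne_int 0 (by simpa [gaussIter] using he.symm)

lemma one_lt_inv_gauss {α : ℝ} (hα : Irrational α) (n : ℕ) :
    1 < (gaussIter α n)⁻¹ :=
  (one_lt_inv₀ (gauss_mem hα n).1).mpr (gauss_mem hα n).2

lemma cfa_pos {α : ℝ} (hα : Irrational α) (n : ℕ) : 1 ≤ cfa α n :=
  Nat.one_le_floor_iff _ |>.mpr (one_lt_inv_gauss hα n).le

lemma gauss_succ {α : ℝ} (hα : Irrational α) (n : ℕ) :
    gaussIter α (n+1) = (gaussIter α n)⁻¹ - (cfa α n : ℝ) := by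
  show Int.fract _ = _
  rw [← Int.self_sub_floor, cfa, natCast_floor_eq_intCast_floor]
  exact le_of_lt (lt_trans one_pos (one_lt_inv_gauss hα n))

lemma cfq_pos {α : ℝ} (hα : Irrational α) : ∀ n, 1 ≤ cfq α n := by
  intro n
  induction n using Nat.strong_induction_on with
  | _ n ih =>
    match n with
    | 0 => simp [cfq]
    | 1 => simpa [cfq] using cfa_pos hα 0
    | (k+2) =>
      have h1 := ih (k+1) (by omega)
      have := cfa_pos hα (k+1)
      simp only [cfq]
      nlinarith

lemma cfq_le {α : ℝ} (hα : Irrational α) : ∀ n, cfq α n ≤ cfq α (n + 1) := by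
  intro n
  match n with
  | 0 => simpa [cfq] using cfa_pos hα 0
  | (k+1) =>
    have h1 := cfq_pos hα k
    have h2 := cfq_pos hα (k+1)
    have := cfa_pos hα (k+1)
    show cfq α (k+1) ≤ cfq α (k+2)
    simp only [cfq]
    nlinarith

lemma cf_det {α : ℝ} : ∀ n, cfp α (n+1) * (cfq α n : ℤ) - cfp α n * (cfq α (n+1) : ℤ) = (-1)^n := by
  intro n
  induction n with
  | zero => simp [cfp, cfq]; ring
  | succ k ih =>
    show cfp α (k+2) * (cfq α (k+1) : ℤ) - cfp α (k+1) * (cfq α (k+2) : ℤ) = _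
    simp only [cfp, cfq]
    push_cast
    push_cast at ih
    rw [pow_succ]
    nlinarith [ih]

noncomputable def gprod (α : ℝ) (n : ℕ) : ℝ := ∏ i ∈ Finset.range (n+1), gaussIter α i

lemma gprod_pos {α : ℝ} (hα : Irrational α) (n : ℕ) : 0 < gprod α n :=
  Finset.prod_pos fun i _ => (gauss_mem hα i).1

lemma cfz_eq {α : ℝ} (hα : Irrational α) : ∀ n, cfz α n = (-1)^n * gprod α n := by
  have g0 : gaussIter α 0 = α - ⌊α⌋ := by
    show Int.fract α = _; rw [Int.fract]
  intro n
  induction n using Nat.strong_induction_on with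
  | _ n ih =>
    match n with
    | 0 =>
      show (cfq α 0 : ℝ) * α - (cfp α 0 : ℝ) = (-1)^0 * gprod α 0
      have h1 : cfq α 0 = 1 := rfl
      have h2 : cfp α 0 = ⌊α⌋ := rfl
      rw [h1, h2, gprod, Finset.prod_range_one, g0]
      push_cast; ring
    | 1 =>
      have h0 := (gauss_mem hα 0).1
      have hs := gauss_succ hα 0
      show (cfq α 1 : ℝ) * α - (cfp α 1 : ℝ) = (-1)^1 * gprod α 1
      have h1 : cfq α 1 = cfa α 0 := rfl
      have h2 : cfp α 1 = (cfa α 0 : ℤ) * ⌊α⌋ + 1 := rfl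
      rw [h1, h2, gprod, Finset.prod_range_succ, Finset.prod_range_one, hs,
        mul_sub, mul_inv_cancel₀ h0.ne', g0]
      push_cast; ring
    | (k+2) =>
      have ih1 := ih (k+1) (by omega)
      have ih0 := ih k (by omega)
      have hk1 := (gauss_mem hα (k+1)).1
      have hs := gauss_succ hα (k+1)
      have hz2 : cfz α (k+2) = (cfa α (k+1) : ℝ) * cfz α (k+1) + cfz α k := by
        have h1 : cfq α (k+2) = cfa α (k+1) * cfq α (k+1) + cfq α k := rfl
        have h2 : cfp α (k+2) = (cfa α (k+1) : ℤ) * cfp α (k+1) + cfp α k := rfl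
        simp only [cfz, h1, h2]; push_cast; ring
      have hp1 : gprod α (k+1) = gprod α k * gaussIter α (k+1) := Finset.prod_range_succ _ _
      have hp2 : gprod α (k+2) = gprod α (k+1) * gaussIter α (k+2) := Finset.prod_range_succ _ _
      have hx : gaussIter α (k+1) * gaussIter α (k+2) = 1 - (cfa α (k+1) : ℝ) * gaussIter α (k+1) := by
        rw [hs, mul_sub, mul_inv_cancel₀ hk1.ne']; ring
      have e1 : ((-1:ℝ))^(k+1) = -(-1)^k := by rw [pow_succ]; ring
      have e2 : ((-1:ℝ))^(k+2) = (-1)^k := by rw [pow_succ, pow_succ]; ring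
      rw [hp1] at ih1
      rw [hz2, ih1, ih0, hp2, hp1, e1, e2]
      linear_combination (-((-1:ℝ))^k * gprod α k) * hx

lemma cfz_abs {α : ℝ} (hα : Irrational α) (n : ℕ) : |cfz α n| = gprod α n := by
  rw [cfz_eq hα n, abs_mul, abs_pow, abs_neg, abs_one, one_pow, one_mul,
    abs_of_pos (gprod_pos hα n)]

lemma cfz_sign {α : ℝ} (hα : Irrational α) (n : ℕ) : cfz α n = (-1)^n * |cfz α n| := by
  rw [cfz_abs hα n, cfz_eq hα n]

lemma cfz_abs_pos {α : ℝ} (hα : Irrational α) (n : ℕ) : 0 < |cfz α n| := by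
  rw [cfz_abs hα n]; exact gprod_pos hα n

lemma cfz_abs_lt {α : ℝ} (hα : Irrational α) (n : ℕ) : |cfz α (n+1)| < |cfz α n| := by
  rw [cfz_abs hα, cfz_abs hα]
  have h : gprod α (n+1) = gprod α n * gaussIter α (n+1) := Finset.prod_range_succ _ _
  rw [h]
  nlinarith [gprod_pos hα n, (gauss_mem hα (n+1)).1, (gauss_mem hα (n+1)).2]

lemma keyA (Q1 Q2 u v : ℤ) (a b : ℝ) (hQ1 : 0 ≤ Q1) (hQ2 : 1 ≤ Q2)
    (hb : 0 < b) (hab : b < a) (hd : |u * Q1 + v * Q2| < Q2)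
    (hy : 0 < (u:ℝ) * a - (v:ℝ) * b) :
    a ≤ (u:ℝ) * a - (v:ℝ) * b ∧ ((u:ℝ) * a - (v:ℝ) * b < a + b → u = 1 ∧ v = 0) := by
  rcases le_or_gt u 0 with hu | hu
  · rcases le_or_gt 0 v with hv | hv
    · exfalso
      have h1 : (u:ℝ) ≤ 0 := by exact_mod_cast hu
      have h2 : (0:ℝ) ≤ v := by exact_mod_cast hv
      nlinarith
    · exfalso
      have h1 : u * Q1 ≤ 0 := mul_nonpos_of_nonpos_of_nonneg hu hQ1
      have h2 : v * Q2 ≤ -Q2 := by nlinarith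
      have : u * Q1 + v * Q2 ≤ -Q2 := by omega
      rw [abs_lt] at hd; omega
  · have hu1 : (1:ℝ) ≤ u := by exact_mod_cast hu
    rcases le_or_gt v 0 with hv | hv
    · have hv0 : (v:ℝ) ≤ 0 := by exact_mod_cast hv
      constructor
      · nlinarith
      · intro hlt
        rcases lt_or_eq_of_le hv with hv1 | hv1
        · exfalso
          have hvi : v ≤ -1 := by omega
          have : (v:ℝ) ≤ -1 := by exact_mod_cast hvi
          nlinarith
        · subst hv1
          refine ⟨?_, rfl⟩
          by_contra hne
          have : 2 ≤ u := by omega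
          have : (2:ℝ) ≤ u := by exact_mod_cast this
          push_cast at hlt
          nlinarith
    · exfalso
      have h1 : 0 ≤ u * Q1 := mul_nonneg hu.le hQ1
      have h2 : Q2 ≤ v * Q2 := by nlinarith
      rw [abs_lt] at hd; omega

lemma lb {α : ℝ} (hα : Irrational α) (n : ℕ) (q q' : ℕ) (p p' : ℤ)
    (hq : q < cfq α (n+1)) (hq' : q' < cfq α (n+1))
    (hpos : 0 < (-1:ℝ)^n * (((q':ℝ) * α - (p':ℝ)) - ((q:ℝ) * α - (p:ℝ)))) :
    |cfz α n| ≤ (-1:ℝ)^n * (((q':ℝ) * α - (p':ℝ)) - ((q:ℝ) * α - (p:ℝ))) ∧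
    ((-1:ℝ)^n * (((q':ℝ) * α - (p':ℝ)) - ((q:ℝ) * α - (p:ℝ))) < |cfz α n| + |cfz α (n+1)| →
      (q' : ℤ) = (q : ℤ) + (cfq α n : ℤ)) := by
  set a := |cfz α n| with ha
  set b := |cfz α (n+1)| with hb
  set Qn : ℤ := (cfq α n : ℤ) with hQn
  set Qn1 : ℤ := (cfq α (n+1) : ℤ) with hQn1
  set Pn : ℤ := cfp α n with hPn
  set Pn1 : ℤ := cfp α (n+1) with hPn1
  set d : ℤ := (q' : ℤ) - (q : ℤ) with hdd
  set m : ℤ := p' - p with hmm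
  set u : ℤ := (-1)^n * (d * Pn1 - m * Qn1) with huu
  set v : ℤ := (-1)^n * (m * Qn - d * Pn) with hvv
  have hdet : Pn1 * Qn - Pn * Qn1 = (-1)^n := cf_det n
  have hsq : ((-1:ℤ))^n * (-1)^n = 1 := by rw [← mul_pow]; norm_num
  set s : ℝ := (-1:ℝ)^n with hss
  have hsqR : s * s = 1 := by rw [hss, ← mul_pow]; norm_num
  have hu : u * Qn + v * Qn1 = d := by
    rw [huu, hvv]
    linear_combination ((-1:ℤ)^n * d) * hdet + d * hsq
  have hm : u * Pn + v * Pn1 = m := by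
    rw [huu, hvv]
    linear_combination ((-1:ℤ)^n * m) * hdet + m * hsq
  have huR : (u:ℝ) * (Qn:ℝ) + (v:ℝ) * (Qn1:ℝ) = (d:ℝ) := by exact_mod_cast congrArg (Int.cast : ℤ → ℝ) hu
  have hmR : (u:ℝ) * (Pn:ℝ) + (v:ℝ) * (Pn1:ℝ) = (m:ℝ) := by exact_mod_cast congrArg (Int.cast : ℤ → ℝ) hm
  have hdR : (d:ℝ) = (q':ℝ) - (q:ℝ) := by push_cast [hdd]; ring
  have hmRR : (m:ℝ) = (p':ℝ) - (p:ℝ) := by push_cast [hmm]; ring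
  have hzn : cfz α n = s * a := cfz_sign hα n
  have hzn1 : cfz α (n+1) = s * (-1) * b := by
    have := cfz_sign hα (n+1)
    rw [pow_succ] at this
    rw [this, hss]
  have key : (-1:ℝ)^n * (((q':ℝ) * α - (p':ℝ)) - ((q:ℝ) * α - (p:ℝ))) = (u:ℝ) * a - (v:ℝ) * b := by
    have h1 : ((q':ℝ) * α - (p':ℝ)) - ((q:ℝ) * α - (p:ℝ)) = (d:ℝ) * α - (m:ℝ) := by
      rw [hdR, hmRR]; ring
    have h2 : (d:ℝ) * α - (m:ℝ) = (u:ℝ) * cfz α n + (v:ℝ) * cfz α (n+1) := by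
      simp only [cfz, ← hQn, ← hQn1, ← hPn, ← hPn1]
      linear_combination α * huR.symm - hmR.symm
    have h2n : ((-1:ℝ))^(n*2) = 1 := by rw [mul_comm, pow_mul, neg_one_sq, one_pow]
    rw [h1, h2, hzn, hzn1]
    linear_combination ((u:ℝ) * a + (v:ℝ) * b) * hsqR + (-(2:ℝ) * v * b) * h2n
  have habs : |u * Qn + v * Qn1| < Qn1 := by
    rw [hu, abs_lt]
    have h1 : (q' : ℤ) < Qn1 := by rw [hQn1]; exact_mod_cast hq'
    have h2 : (q : ℤ) < Qn1 := by rw [hQn1]; exact_mod_cast hq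
    have h3 : (0:ℤ) ≤ (q' : ℤ) := Int.ofNat_nonneg q'
    have h4 : (0:ℤ) ≤ (q : ℤ) := Int.ofNat_nonneg q
    omega
  have hK := keyA Qn Qn1 u v a b (Int.ofNat_nonneg _) (by rw [hQn1]; exact_mod_cast cfq_pos hα (n+1))
    (cfz_abs_pos hα (n+1)) (cfz_abs_lt hα n) habs (by rw [← key]; exact hpos)
  constructor
  · rw [key]; exact hK.1
  · intro hlt
    rw [key] at hlt
    obtain ⟨hu1, hv0⟩ := hK.2 hlt
    rw [hu1, hv0] at hu
    simp at hu
    omega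



/-- Sharp description of the gaps in the set `𝒳_n`: for `x = qα - p ∈ 𝒳_n`, if `n` is even,
the successor of `x` in `𝒳_n` is `x + |z_n|` when `q < q_{n+1} - q_n` and
`x + |z_n| + |z_{n+1}|` when `q ≥ q_{n+1} - q_n`; if `n` is odd the same holds for the
predecessor with `+` replaced by `-`. -/
theorem statement10 (α : ℝ) (hα : Irrational α) (n : ℕ) (q : ℕ) (p : ℤ)
    (hq : q < cfq α (n + 1)) :
    (Even n →
      (q + cfq α n < cfq α (n + 1) →
        IsLeast {y ∈ Xset α n | (q : ℝ) * α - (p : ℝ) < y}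
          ((q : ℝ) * α - (p : ℝ) + |cfz α n|)) ∧
      (cfq α (n + 1) ≤ q + cfq α n →
        IsLeast {y ∈ Xset α n | (q : ℝ) * α - (p : ℝ) < y}
          ((q : ℝ) * α - (p : ℝ) + |cfz α n| + |cfz α (n + 1)|))) ∧
    (Odd n →
      (q + cfq α n < cfq α (n + 1) →
        IsGreatest {y ∈ Xset α n | y < (q : ℝ) * α - (p : ℝ)}
          ((q : ℝ) * α - (p : ℝ) - |cfz α n|)) ∧
      (cfq α (n + 1) ≤ q + cfq α n →
        IsGreatest {y ∈ Xset α n | y < (q : ℝ) * α - (p : ℝ)}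
          ((q : ℝ) * α - (p : ℝ) - |cfz α n| - |cfz α (n + 1)|))) := by
  have ha := cfz_abs_pos hα n
  have hb := cfz_abs_pos hα (n + 1)
  have hba := cfz_abs_lt hα n
  have hqle := cfq_le hα n
  have e0 := cfz_eq hα n
  have e1 := cfz_eq hα (n+1)
  rw [pow_succ] at e1
  constructor
  · -- even
    intro hev
    have hs : ((-1:ℝ))^n = 1 := hev.neg_one_pow
    rw [hs, one_mul] at e0
    rw [hs, one_mul, neg_one_mul] at e1
    have hzn : |cfz α n| = cfz α n := by
      rw [e0]; exact abs_of_pos (gprod_pos hα n)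
    have hzn1 : |cfz α (n+1)| = -cfz α (n+1) := by
      rw [e1, abs_neg, abs_of_pos (gprod_pos hα (n+1)), neg_neg]
    constructor
    · intro h1
      constructor
      · refine ⟨⟨q + cfq α n, h1, p + cfp α n, ?_⟩, by linarith⟩
        rw [hzn]
        simp only [cfz]
        push_cast
        ring
      · rintro y ⟨⟨q', hq', p', rfl⟩, hxy⟩
        have := (lb hα n q q' p p' hq hq' (by rw [hs, one_mul]; linarith)).1
        rw [hs, one_mul] at this
        linarith
    · intro h2
      constructor
      · have hc : ((q + cfq α n - cfq α (n+1) : ℕ) : ℝ) = (q:ℝ) + (cfq α n : ℝ) - (cfq α (n+1) : ℝ) := by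
          rw [Nat.cast_sub h2]; push_cast; ring
        refine ⟨⟨q + cfq α n - cfq α (n+1), by omega, p + cfp α n - cfp α (n+1), ?_⟩, by linarith⟩
        rw [hzn, hzn1, hc]
        simp only [cfz]
        push_cast
        ring
      · rintro y ⟨⟨q', hq', p', rfl⟩, hxy⟩
        by_contra hcon
        push_neg at hcon
        have hl := (lb hα n q q' p p' hq hq' (by rw [hs, one_mul]; linarith)).2
        rw [hs, one_mul] at hl
        have heq := hl (by linarith)
        have hc1 : (q' : ℤ) < (cfq α (n+1) : ℤ) := by exact_mod_cast hq'
        have hc2 : (cfq α (n+1) : ℤ) ≤ (q : ℤ) + (cfq α n : ℤ) := by exact_mod_cast h2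
        omega
  · -- odd
    intro hodd
    have hs : ((-1:ℝ))^n = -1 := hodd.neg_one_pow
    rw [hs, neg_one_mul] at e0
    rw [hs] at e1
    have e1' : cfz α (n+1) = gprod α (n+1) := by rw [e1]; ring
    have hzn : |cfz α n| = -cfz α n := by
      rw [e0, abs_neg, abs_of_pos (gprod_pos hα n), neg_neg]
    have hzn1 : |cfz α (n+1)| = cfz α (n+1) := by
      rw [e1']; exact abs_of_pos (gprod_pos hα (n+1))
    constructor
    · intro h1
      constructor
      · refine ⟨⟨q + cfq α n, h1, p + cfp α n, ?_⟩, by linarith⟩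
        rw [hzn]
        simp only [cfz]
        push_cast
        ring
      · rintro y ⟨⟨q', hq', p', rfl⟩, hxy⟩
        have := (lb hα n q q' p p' hq hq' (by rw [hs]; linarith)).1
        rw [hs] at this
        linarith
    · intro h2
      constructor
      · have hc : ((q + cfq α n - cfq α (n+1) : ℕ) : ℝ) = (q:ℝ) + (cfq α n : ℝ) - (cfq α (n+1) : ℝ) := by
          rw [Nat.cast_sub h2]; push_cast; ring
        refine ⟨⟨q + cfq α n - cfq α (n+1), by omega, p + cfp α n - cfp α (n+1), ?_⟩, by linarith⟩
        rw [hzn, hzn1, hc]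
        simp only [cfz]
        push_cast
        ring
      · rintro y ⟨⟨q', hq', p', rfl⟩, hxy⟩
        by_contra hcon
        push_neg at hcon
        have hl := (lb hα n q q' p p' hq hq' (by rw [hs]; linarith)).2
        rw [hs] at hl
        have heq := hl (by linarith)
        have hc1 : (q' : ℤ) < (cfq α (n+1) : ℤ) := by exact_mod_cast hq'
        have hc2 : (cfq α (n+1) : ℤ) ≤ (q : ℤ) + (cfq α n : ℤ) := by exact_mod_cast h2
        omega
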